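/- Suppose a positive sequence x_k satisfies x_k^{d/2}/k → (2π)^d/ω_d as k → ∞ (Weyl's law for the generator Ω), and a sequence L_k ≤ x_k satisfies: L_k^{d/2}/k converges to its infimum over k, and there is an infinite set of indices k along which L_k = x_k. Then inf_k L_k^{d/2}/k = (2π)^d/ω_d; consequently, for every k, L_k^{d/2} ≥ (2π)^d k / ω_d. -/

import Mathlib

open Filter Topology MeasureTheory

/-- The volume of the unit ball in `ℝ^d`. -/
noncomputable def omegaBall (d : ℕ) : ℝ :=
  (volume (Metric.ball (0 : EuclideanSpace ℝ (Fin d)) 1)).toReal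

/-- If `x k = λ_k(Ω)` satisfies Weyl's law `x_k^{d/2}/k → (2π)^d/ω_d`, and `L k ≤ x k`
is positive with `L_k^{d/2}/k` converging to its infimum, and `L k = x k` for infinitely
many `k`, then the infimum equals `(2π)^d/ω_d`; consequently `L_k^{d/2} ≥ (2π)^d k/ω_d`
for every `k ≥ 1` (Pólya's conjecture within the family). -/
theorem polya_of_generator_minimiser_infinitely_often
    (d : ℕ) (hd : 2 ≤ d) (x L : ℕ → ℝ)
    (hLpos : ∀ k, 1 ≤ k → 0 < L k)
    (hWeyl : Tendsto (fun k : ℕ => x k ^ ((d : ℝ) / 2) / k) atTop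
      (𝓝 ((2 * Real.pi) ^ d / omegaBall d)))
    (hle : ∀ k, L k ≤ x k)
    (hFekete : Tendsto (fun k : ℕ => L k ^ ((d : ℝ) / 2) / k) atTop
      (𝓝 (⨅ k : ℕ+, L k ^ ((d : ℝ) / 2) / ((k : ℕ) : ℝ))))
    (hinf : {k : ℕ | L k = x k}.Infinite) :
    (⨅ k : ℕ+, L k ^ ((d : ℝ) / 2) / ((k : ℕ) : ℝ)) = (2 * Real.pi) ^ d / omegaBall d ∧
    ∀ k, 1 ≤ k → (2 * Real.pi) ^ d / omegaBall d * k ≤ L k ^ ((d : ℝ) / 2) := by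
  have hbdd : BddBelow (Set.range fun k : ℕ+ => L k ^ ((d : ℝ) / 2) / ((k : ℕ) : ℝ)) := by
    refine ⟨0, ?_⟩
    rintro _ ⟨k, rfl⟩
    have hk : (0 : ℝ) < L k := hLpos k k.one_le
    positivity
  have hfreq : ∃ᶠ k in atTop, L k = x k := Nat.frequently_atTop_iff_infinite.mpr hinf
  obtain ⟨φ, hφmono, hφ⟩ := Filter.extraction_of_frequently_atTop hfreq
  have h1 : Tendsto (fun n => L (φ n) ^ ((d : ℝ) / 2) / (φ n : ℝ)) atTop
      (𝓝 (⨅ k : ℕ+, L k ^ ((d : ℝ) / 2) / ((k : ℕ) : ℝ))) :=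
    hFekete.comp hφmono.tendsto_atTop
  have h2 : Tendsto (fun n => L (φ n) ^ ((d : ℝ) / 2) / (φ n : ℝ)) atTop
      (𝓝 ((2 * Real.pi) ^ d / omegaBall d)) := by
    have := hWeyl.comp hφmono.tendsto_atTop
    simpa [Function.comp_def, hφ] using this
  have heq := tendsto_nhds_unique h1 h2
  refine ⟨heq, fun k hk => ?_⟩
  have hkpos : (0 : ℝ) < k := by exact_mod_cast hk
  have hI : (⨅ k : ℕ+, L k ^ ((d : ℝ) / 2) / ((k : ℕ) : ℝ)) ≤
      L k ^ ((d : ℝ) / 2) / (k : ℝ) := by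
    have := ciInf_le hbdd (⟨k, hk⟩ : ℕ+)
    simpa using this
  rw [heq] at hI
  exact (le_div_iff₀ hkpos).mp hI
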